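/- For a path P_n with n ≥ 3, the Roman bondage number b_R(P_n) equals 1 if n ≡ 0 or 1 (mod 3), and equals 2 if n ≡ 2 (mod 3). -/

import Mathlib

open SimpleGraph Finset

/-- A Roman dominating function: `f : V → ℕ` taking values in `{0,1,2}` such that
every vertex with value `0` has a neighbor with value `2`. -/
def IsRDF {V : Type*} (G : SimpleGraph V) (f : V → ℕ) : Prop :=
  (∀ v, f v ≤ 2) ∧ ∀ v, f v = 0 → ∃ u, G.Adj v u ∧ f u = 2

/-- The Roman domination number: minimum weight of a Roman dominating function. -/
noncomputable def romanDomNum {V : Type*} (G : SimpleGraph V) [Fintype V] : ℕ :=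
  sInf {w | ∃ f : V → ℕ, IsRDF G f ∧ ∑ v, f v = w}

/-- The Roman bondage number: minimum number of edges whose removal increases
the Roman domination number (`⊤` if no such edge set exists). -/
noncomputable def romanBondage {V : Type*} (G : SimpleGraph V) [Fintype V] : ℕ∞ :=
  sInf {k | ∃ B : Finset (Sym2 V), ↑B ⊆ G.edgeSet ∧ (B.card : ℕ∞) = k ∧
    romanDomNum (G.deleteEdges ↑B) > romanDomNum G}

/-- A dominating set: every vertex is in `S` or adjacent to a member of `S`. -/
def IsDomSet {V : Type*} (G : SimpleGraph V) (S : Set V) : Prop :=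
  ∀ v, v ∈ S ∨ ∃ u ∈ S, G.Adj v u

/-- The domination number: minimum size of a dominating set. -/
noncomputable def domNum {V : Type*} (G : SimpleGraph V) [Fintype V] : ℕ :=
  sInf {k | ∃ S : Finset V, IsDomSet G ↑S ∧ S.card = k}

/-- The bondage number: minimum number of edges whose removal increases
the domination number (`⊤` if no such edge set exists). -/
noncomputable def bondage {V : Type*} (G : SimpleGraph V) [Fintype V] : ℕ∞ :=
  sInf {k | ∃ B : Finset (Sym2 V), ↑B ⊆ G.edgeSet ∧ (B.card : ℕ∞) = k ∧
    domNum (G.deleteEdges ↑B) > domNum G}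

/-! ### Auxiliary definitions and lemmas -/

/-- The pattern function: weight `2` at positions `≡ 1 (mod 3)`, plus a `1` at the
end of an interval of length `≡ 1 (mod 3)`. -/
def pat (L r : ℕ) : ℕ :=
  if r % 3 = 1 then 2 else if r + 1 = L ∧ L % 3 = 1 then 1 else 0

/-- The Roman domination number of a path on `L` vertices, in closed form. -/
def roman (L : ℕ) : ℕ := (2 * L + 2) / 3

lemma pat_le_two (L r : ℕ) : pat L r ≤ 2 := by
  unfold pat; split_ifs <;> omega

lemma pat_eq_two {L r : ℕ} (h : r % 3 = 1) : pat L r = 2 := if_pos h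

lemma pat_zero_cases {L r : ℕ} (hr : r < L) (h : pat L r = 0) :
    (r % 3 = 0 ∧ r + 1 < L) ∨ r % 3 = 2 := by
  unfold pat at h; split_ifs at h <;> omega

lemma sum_pat (L : ℕ) : ∑ r ∈ Finset.range L, pat L r = roman L := by
  have hdec : ∀ r, pat L r =
      (if r % 3 = 1 then 2 else 0) + (if r + 1 = L ∧ L % 3 = 1 then 1 else 0) := by
    intro r; unfold pat; split_ifs <;> omega
  rw [Finset.sum_congr rfl fun r _ => hdec r, Finset.sum_add_distrib]
  have h1 : ∀ M : ℕ, ∑ r ∈ Finset.range M, (if r % 3 = 1 then 2 else 0)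
      = 2 * ((M + 1) / 3) := by
    intro M
    induction M with
    | zero => simp
    | succ m ih => rw [Finset.sum_range_succ, ih]; split_ifs <;> omega
  have h2 : ∑ r ∈ Finset.range L, (if r + 1 = L ∧ L % 3 = 1 then 1 else 0)
      = if L % 3 = 1 then 1 else 0 := by
    by_cases hL : L % 3 = 1
    · have h1L : 1 ≤ L := by omega
      rw [if_pos hL]
      have : ∀ r ∈ Finset.range L, (if r + 1 = L ∧ L % 3 = 1 then 1 else 0)
          = if r = L - 1 then 1 else 0 := by
        intro r hr; simp only [Finset.mem_range] at hr; split_ifs <;> omega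
      rw [Finset.sum_congr rfl this, Finset.sum_ite_eq' (Finset.range L) (L - 1) fun _ => 1,
        if_pos (by simp only [Finset.mem_range]; omega)]
    · rw [if_neg hL]
      apply Finset.sum_eq_zero; intro r _; simp [hL]
  rw [h1, h2]; unfold roman; split_ifs <;> omega

/-- Construction of a Roman dominating function on any graph containing the path
with (up to) two cut points `m1 ≤ m2`. -/
lemma exists_rdf_cuts (n m1 m2 : ℕ) (h12 : m1 ≤ m2) (h2n : m2 ≤ n)
    (H : SimpleGraph (Fin n))
    (hadj : ∀ u v : Fin n, u.val + 1 = v.val → v.val ≠ m1 → v.val ≠ m2 → H.Adj u v) :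
    ∃ f : Fin n → ℕ, IsRDF H f ∧
      ∑ v, f v = roman m1 + roman (m2 - m1) + roman (n - m2) := by
  classical
  set g : ℕ → ℕ := fun i =>
    if i < m1 then pat m1 i
    else if i < m2 then pat (m2 - m1) (i - m1)
    else pat (n - m2) (i - m2) with hg
  refine ⟨fun v => g v.val, ⟨?_, ?_⟩, ?_⟩
  · intro v; simp only [hg]; split_ifs <;> exact pat_le_two _ _
  · intro v hv0
    simp only [hg] at hv0
    by_cases hc1 : v.val < m1
    · rw [if_pos hc1] at hv0
      rcases pat_zero_cases hc1 hv0 with ⟨h3, hlt⟩ | h3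
      · refine ⟨⟨v.val + 1, by omega⟩, hadj v _ rfl (by simp; omega) (by simp; omega), ?_⟩
        show g (v.val + 1) = 2
        rw [hg]; simp only
        rw [if_pos (by omega : v.val + 1 < m1)]
        exact pat_eq_two (by omega)
      · have hv2 : 2 ≤ v.val := by omega
        refine ⟨⟨v.val - 1, by omega⟩,
          (hadj ⟨v.val - 1, by omega⟩ v (by simp; omega) (by omega) (by omega)).symm, ?_⟩
        show g (v.val - 1) = 2
        rw [hg]; simp only
        rw [if_pos (by omega : v.val - 1 < m1)]
        exact pat_eq_two (by omega)
    · by_cases hc2 : v.val < m2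
      · rw [if_neg hc1, if_pos hc2] at hv0
        rcases pat_zero_cases (by omega : v.val - m1 < m2 - m1) hv0 with ⟨h3, hlt⟩ | h3
        · refine ⟨⟨v.val + 1, by omega⟩, hadj v _ rfl (by simp; omega) (by simp; omega), ?_⟩
          show g (v.val + 1) = 2
          rw [hg]; simp only
          rw [if_neg (by omega), if_pos (by omega : v.val + 1 < m2)]
          exact pat_eq_two (by omega)
        · refine ⟨⟨v.val - 1, by omega⟩,
            (hadj ⟨v.val - 1, by omega⟩ v (by simp; omega) (by omega) (by omega)).symm, ?_⟩
          show g (v.val - 1) = 2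
          rw [hg]; simp only
          rw [if_neg (by omega), if_pos (by omega : v.val - 1 < m2)]
          exact pat_eq_two (by omega)
      · rw [if_neg hc1, if_neg hc2] at hv0
        rcases pat_zero_cases (by omega : v.val - m2 < n - m2) hv0 with ⟨h3, hlt⟩ | h3
        · refine ⟨⟨v.val + 1, by omega⟩, hadj v _ rfl (by simp; omega) (by simp; omega), ?_⟩
          show g (v.val + 1) = 2
          rw [hg]; simp only
          rw [if_neg (by omega), if_neg (by omega)]
          exact pat_eq_two (by omega)
        · refine ⟨⟨v.val - 1, by omega⟩,
            (hadj ⟨v.val - 1, by omega⟩ v (by simp; omega) (by omega) (by omega)).symm, ?_⟩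
          show g (v.val - 1) = 2
          rw [hg]; simp only
          rw [if_neg (by omega), if_neg (by omega)]
          exact pat_eq_two (by omega)
  · rw [Fin.sum_univ_eq_sum_range g n, Finset.range_eq_Ico,
      ← Finset.sum_Ico_consecutive g (Nat.zero_le m1) (le_trans h12 h2n),
      ← Finset.sum_Ico_consecutive g h12 h2n]
    have e1 : ∑ i ∈ Finset.Ico 0 m1, g i = roman m1 := by
      rw [← Finset.range_eq_Ico, ← sum_pat m1]
      apply Finset.sum_congr rfl
      intro i hi; simp only [Finset.mem_range] at hi
      simp only [hg]; rw [if_pos hi]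
    have e2 : ∑ i ∈ Finset.Ico m1 m2, g i = roman (m2 - m1) := by
      rw [Finset.sum_Ico_eq_sum_range, ← sum_pat (m2 - m1)]
      apply Finset.sum_congr rfl
      intro i hi; simp only [Finset.mem_range] at hi
      simp only [hg]; rw [if_neg (by omega), if_pos (by omega)]
      congr 1; omega
    have e3 : ∑ i ∈ Finset.Ico m2 n, g i = roman (n - m2) := by
      rw [Finset.sum_Ico_eq_sum_range, ← sum_pat (n - m2)]
      apply Finset.sum_congr rfl
      intro i hi; simp only [Finset.mem_range] at hi
      simp only [hg]; rw [if_neg (by omega), if_neg (by omega)]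
      congr 1; omega
    rw [e1, e2, e3]; omega

/-- The key counting lower bound: on a subgraph of a path, the weight of a Roman
dominating function restricted to a "closed" interval `[a, b)` is at least `2(b-a)/3`. -/
lemma interval_lb (n a b : ℕ) (hbn : b ≤ n) (H : SimpleGraph (Fin n))
    (hpath : ∀ u v : Fin n, H.Adj u v → u.val + 1 = v.val ∨ v.val + 1 = u.val)
    (hcut : ∀ u v : Fin n, H.Adj u v → u.val + 1 = v.val → v.val ≠ a ∧ v.val ≠ b)
    (f : Fin n → ℕ) (hf : IsRDF H f) :
    2 * (b - a) ≤ 3 * ∑ v ∈ univ.filter (fun v : Fin n => a ≤ v.val ∧ v.val < b), f v := by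
  classical
  set S := univ.filter (fun v : Fin n => a ≤ v.val ∧ v.val < b) with hS
  have hmemS : ∀ v : Fin n, v ∈ S ↔ (a ≤ v.val ∧ v.val < b) := by
    intro v; simp [hS]
  have hclosed : ∀ u v : Fin n, H.Adj u v → (a ≤ v.val ∧ v.val < b) →
      (a ≤ u.val ∧ u.val < b) := by
    intro u v hadj hv
    rcases hpath u v hadj with h | h
    · have := hcut u v hadj h; omega
    · have := hcut v u hadj.symm h; omega
  have himg : S.image Fin.val = Finset.Ico a b := by
    ext x
    simp only [Finset.mem_image, Finset.mem_Ico]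
    constructor
    · rintro ⟨v, hv, rfl⟩; exact (hmemS v).mp hv
    · intro hx; exact ⟨⟨x, by omega⟩, (hmemS _).mpr hx, rfl⟩
  have hcard : S.card = b - a := by
    rw [← Finset.card_image_of_injective S Fin.val_injective, himg, Nat.card_Ico]
  set S0 := S.filter (fun v => f v = 0) with hS0
  set S1 := S.filter (fun v => f v = 1) with hS1
  set S2 := S.filter (fun v => f v = 2) with hS2
  have eqA' : (S.filter (fun v => ¬ f v = 0)).filter (fun v => f v = 1) = S1 := by
    ext v
    simp only [hS1, Finset.mem_filter]
    constructor
    · rintro ⟨⟨h1, _⟩, h3⟩; exact ⟨h1, h3⟩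
    · rintro ⟨h1, h2⟩; exact ⟨⟨h1, by omega⟩, h2⟩
  have eqB' : (S.filter (fun v => ¬ f v = 0)).filter (fun v => ¬ f v = 1) = S2 := by
    ext v
    simp only [hS2, Finset.mem_filter]
    constructor
    · rintro ⟨⟨h1, h2⟩, h3⟩; exact ⟨h1, by have := hf.1 v; omega⟩
    · rintro ⟨h1, h2⟩; exact ⟨⟨h1, by omega⟩, by omega⟩
  have hcards : S0.card + S1.card + S2.card = S.card := by
    have e1 := Finset.card_filter_add_card_filter_not (s := S)
      (p := fun v => f v = 0)
    have e2 := Finset.card_filter_add_card_filter_not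
      (s := S.filter (fun v => ¬ f v = 0)) (p := fun v => f v = 1)
    rw [eqA', eqB'] at e2
    rw [← hS0] at e1
    omega
  have hsum : ∑ v ∈ S, f v = S1.card + 2 * S2.card := by
    rw [← Finset.sum_filter_add_sum_filter_not S (fun v => f v = 0) f,
      ← Finset.sum_filter_add_sum_filter_not (S.filter (fun v => ¬ f v = 0))
        (fun v => f v = 1) f,
      eqA', eqB', ← hS0]
    have z0 : ∑ v ∈ S0, f v = 0 :=
      Finset.sum_eq_zero fun v hv => (Finset.mem_filter.mp hv).2
    have z1 : ∑ v ∈ S1, f v = S1.card * 1 :=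
      Finset.sum_const_nat fun v hv => (Finset.mem_filter.mp hv).2
    have z2 : ∑ v ∈ S2, f v = S2.card * 2 :=
      Finset.sum_const_nat fun v hv => (Finset.mem_filter.mp hv).2
    rw [z0, z1, z2]; ring
  have key : S0.card ≤ 2 * S2.card := by
    have hwit : ∀ v ∈ S0, ∃ u, H.Adj v u ∧ f u = 2 :=
      fun v hv => hf.2 v (Finset.mem_filter.mp hv).2
    choose! g hg1 hg2 using hwit
    apply Finset.card_le_mul_card_image_of_maps_to (f := g) ?_ 2 ?_
    · intro v hv
      have hvS : a ≤ v.val ∧ v.val < b := (hmemS v).mp (Finset.mem_filter.mp hv).1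
      have hadj := hg1 v hv
      refine Finset.mem_filter.mpr ⟨(hmemS _).mpr ?_, hg2 v hv⟩
      exact hclosed (g v) v hadj.symm hvS
    · intro u _
      have hsub : (S0.filter (fun v => g v = u)) ⊆
          univ.filter (fun v : Fin n => v.val = u.val + 1 ∨ v.val + 1 = u.val) := by
        intro v hv
        obtain ⟨hv0, hgv⟩ := Finset.mem_filter.mp hv
        have hadj : H.Adj v u := hgv ▸ hg1 v hv0
        refine Finset.mem_filter.mpr ⟨Finset.mem_univ _, ?_⟩
        rcases hpath v u hadj with h | h
        · exact Or.inr h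
        · exact Or.inl h.symm
      refine le_trans (Finset.card_le_card hsub) ?_
      have hinj : Set.InjOn (fun v : Fin n => decide (v.val = u.val + 1))
          (univ.filter (fun v : Fin n => v.val = u.val + 1 ∨ v.val + 1 = u.val)) := by
        intro v1 h1 v2 h2 hd
        simp only [Finset.coe_filter, Set.mem_setOf_eq] at h1 h2
        have hiff : (v1.val = u.val + 1) ↔ (v2.val = u.val + 1) := by
          simpa [decide_eq_decide] using hd
        have h1' := h1.2; have h2' := h2.2
        apply Fin.ext; omega
      have := Finset.card_le_card_of_injOn _ (fun v _ => Finset.mem_univ _) hinj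
      simpa using this
  omega

lemma sum_three (n m1 m2 : ℕ) (h12 : m1 ≤ m2) (f : Fin n → ℕ) :
    ∑ v, f v = ∑ v ∈ univ.filter (fun v : Fin n => 0 ≤ v.val ∧ v.val < m1), f v
      + ∑ v ∈ univ.filter (fun v : Fin n => m1 ≤ v.val ∧ v.val < m2), f v
      + ∑ v ∈ univ.filter (fun v : Fin n => m2 ≤ v.val ∧ v.val < n), f v := by
  classical
  rw [← Finset.sum_filter_add_sum_filter_not univ (fun v : Fin n => v.val < m1) f,
    ← Finset.sum_filter_add_sum_filter_not (univ.filter (fun v : Fin n => ¬ v.val < m1))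
      (fun v : Fin n => v.val < m2) f]
  have e1 : univ.filter (fun v : Fin n => v.val < m1)
      = univ.filter (fun v : Fin n => 0 ≤ v.val ∧ v.val < m1) := by
    ext v; simp
  have e2 : (univ.filter (fun v : Fin n => ¬ v.val < m1)).filter (fun v : Fin n => v.val < m2)
      = univ.filter (fun v : Fin n => m1 ≤ v.val ∧ v.val < m2) := by
    ext v; simp only [Finset.mem_filter, Finset.mem_univ, true_and]; omega
  have e3 : (univ.filter (fun v : Fin n => ¬ v.val < m1)).filter (fun v : Fin n => ¬ v.val < m2)
      = univ.filter (fun v : Fin n => m2 ≤ v.val ∧ v.val < n) := by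
    ext v; simp only [Finset.mem_filter, Finset.mem_univ, true_and]
    have := v.isLt; omega
  rw [e1, e2, e3]; ring

lemma rdn_le {V : Type*} [Fintype V] (G : SimpleGraph V) (f : V → ℕ) (hf : IsRDF G f) :
    romanDomNum G ≤ ∑ v, f v := Nat.sInf_le ⟨f, hf, rfl⟩

lemma rdn_exists {V : Type*} [Fintype V] (G : SimpleGraph V) :
    ∃ f : V → ℕ, IsRDF G f ∧ ∑ v, f v = romanDomNum G := by
  have h : romanDomNum G ∈ {w | ∃ f : V → ℕ, IsRDF G f ∧ ∑ v, f v = w} :=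
    Nat.sInf_mem ⟨_, fun _ => 2, ⟨fun _ => le_rfl, fun _ h => by simp at h⟩, rfl⟩
  exact h

/-- The Roman domination number of the path graph. -/
lemma rdn_path (n : ℕ) : romanDomNum (pathGraph n) = (2 * n + 2) / 3 := by
  have hup : romanDomNum (pathGraph n) ≤ roman 0 + roman (0 - 0) + roman (n - 0) := by
    obtain ⟨f, hf, hsum⟩ := exists_rdf_cuts n 0 0 le_rfl (Nat.zero_le n) (pathGraph n)
      (fun u v h _ _ => pathGraph_adj.mpr (Or.inl h))
    exact hsum ▸ rdn_le (pathGraph n) f hf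
  have hlo : 2 * n ≤ 3 * romanDomNum (pathGraph n) := by
    obtain ⟨f, hf, hsum⟩ := rdn_exists (pathGraph n)
    have h1 := interval_lb n 0 n le_rfl (pathGraph n) (fun u v h => pathGraph_adj.mp h)
      (fun u v _ huv => by have := v.isLt; omega) f hf
    have h2 : ∑ v ∈ univ.filter (fun v : Fin n => 0 ≤ v.val ∧ v.val < n), f v ≤ ∑ v, f v :=
      Finset.sum_le_sum_of_subset (Finset.filter_subset _ _)
    omega
  unfold roman at hup
  omega

/-- In the edge-deleted graph, no edge of the path crosses a deleted cut. -/
lemma adj_del_ne (n : ℕ) (B : Finset (Sym2 (Fin n))) (x y : Fin n)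
    (hxy : x.val + 1 = y.val) (hmem : s(x, y) ∈ B)
    (u v : Fin n) (h : ((pathGraph n).deleteEdges ↑B).Adj u v) (huv : u.val + 1 = v.val) :
    v.val ≠ y.val := by
  intro hvc
  rw [SimpleGraph.deleteEdges_adj] at h
  apply h.2
  have hu : u = x := Fin.ext (by omega)
  have hv : v = y := Fin.ext hvc
  subst hu
  subst hv
  exact Finset.mem_coe.mpr hmem

lemma sym2_ne (n : ℕ) (p q u v : Fin n) (hpq : p.val + 1 = q.val) (huv : u.val + 1 = v.val)
    (hne : q.val ≠ v.val) : s(p, q) ≠ s(u, v) := by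
  intro h
  rcases Sym2.eq_iff.mp h with ⟨h1, h2⟩ | ⟨h1, h2⟩
  · exact hne (congrArg Fin.val h2)
  · have e1 := congrArg Fin.val h1
    have e2 := congrArg Fin.val h2
    omega

/-- When `n ≡ 2 (mod 3)`, deleting a single edge cannot increase the Roman
domination number. -/
lemma single_edge_aux (n : ℕ) (h2 : n % 3 = 2) (u v : Fin n) (h : u.val + 1 = v.val) :
    romanDomNum ((pathGraph n).deleteEdges {s(u, v)}) ≤ (2 * n + 2) / 3 := by
  have hadj : ∀ p q : Fin n, p.val + 1 = q.val → q.val ≠ v.val → q.val ≠ v.val →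
      ((pathGraph n).deleteEdges {s(u, v)}).Adj p q := by
    intro p q hpq hq _
    rw [SimpleGraph.deleteEdges_adj]
    refine ⟨pathGraph_adj.mpr (Or.inl hpq), ?_⟩
    rw [Set.mem_singleton_iff]
    exact sym2_ne n p q u v hpq h hq
  obtain ⟨f, hf, hsum⟩ := exists_rdf_cuts n v.val v.val le_rfl (le_of_lt v.isLt)
    ((pathGraph n).deleteEdges {s(u, v)}) hadj
  have hle := rdn_le _ f hf
  rw [hsum] at hle
  unfold roman at hle
  have hv1 : 1 ≤ v.val := by omega
  have hvn : v.val < n := v.isLt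
  omega

lemma single_edge (n : ℕ) (h2 : n % 3 = 2) (u v : Fin n)
    (hadj : (pathGraph n).Adj u v) :
    romanDomNum ((pathGraph n).deleteEdges {s(u, v)}) ≤ romanDomNum (pathGraph n) := by
  rw [rdn_path n]
  rcases pathGraph_adj.mp hadj with h | h
  · exact single_edge_aux n h2 u v h
  · rw [Sym2.eq_swap]
    exact single_edge_aux n h2 v u h

theorem roman_bondage_path (n : ℕ) (hn : 3 ≤ n) :
    romanBondage (pathGraph n) = if n % 3 = 2 then 2 else 1 := by
  classical
  unfold romanBondage
  have hpathG : ∀ u v : Fin n, (pathGraph n).Adj u v → u.val + 1 = v.val ∨ v.val + 1 = u.val :=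
    fun u v h => pathGraph_adj.mp h
  by_cases h2 : n % 3 = 2
  · rw [if_pos h2]
    have hn5 : 5 ≤ n := by omega
    apply le_antisymm
    · apply sInf_le
      refine ⟨({s((⟨1, by omega⟩ : Fin n), (⟨2, by omega⟩ : Fin n)),
               s((⟨3, by omega⟩ : Fin n), (⟨4, by omega⟩ : Fin n))} : Finset (Sym2 (Fin n))),
        ?_, ?_, ?_⟩
      · intro e he
        simp only [Finset.coe_insert, Finset.coe_singleton, Set.mem_insert_iff,
          Set.mem_singleton_iff] at he
        rcases he with rfl | rfl
        · exact (pathGraph n).mem_edgeSet.mpr (pathGraph_adj.mpr (Or.inl rfl))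
        · exact (pathGraph n).mem_edgeSet.mpr (pathGraph_adj.mpr (Or.inl rfl))
      · have hne : s((⟨1, by omega⟩ : Fin n), (⟨2, by omega⟩ : Fin n))
            ≠ s((⟨3, by omega⟩ : Fin n), (⟨4, by omega⟩ : Fin n)) :=
          sym2_ne n _ _ _ _ rfl rfl (by simp)
        rw [Finset.card_insert_of_notMem (fun h => hne (Finset.mem_singleton.mp h)),
          Finset.card_singleton]
        rfl
      · set B : Finset (Sym2 (Fin n)) :=
          {s((⟨1, by omega⟩ : Fin n), (⟨2, by omega⟩ : Fin n)),
           s((⟨3, by omega⟩ : Fin n), (⟨4, by omega⟩ : Fin n))} with hB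
        set H := (pathGraph n).deleteEdges ↑B with hH
        obtain ⟨f, hf, hsum⟩ := rdn_exists H
        have hpathH : ∀ u v : Fin n, H.Adj u v → u.val + 1 = v.val ∨ v.val + 1 = u.val :=
          fun u v h => hpathG u v ((SimpleGraph.deleteEdges_adj).mp h).1
        have c2 : ∀ u v : Fin n, H.Adj u v → u.val + 1 = v.val → v.val ≠ 2 :=
          adj_del_ne n B ⟨1, by omega⟩ ⟨2, by omega⟩ rfl (Finset.mem_insert_self _ _)
        have c4 : ∀ u v : Fin n, H.Adj u v → u.val + 1 = v.val → v.val ≠ 4 :=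
          adj_del_ne n B ⟨3, by omega⟩ ⟨4, by omega⟩ rfl
            (Finset.mem_insert_of_mem (Finset.mem_singleton_self _))
        have b1 := interval_lb n 0 2 (by omega) H hpathH
          (fun u v h huv => ⟨by omega, c2 u v h huv⟩) f hf
        have b2 := interval_lb n 2 4 (by omega) H hpathH
          (fun u v h huv => ⟨c2 u v h huv, c4 u v h huv⟩) f hf
        have b3 := interval_lb n 4 n (by omega) H hpathH
          (fun u v h huv => ⟨c4 u v h huv, by have := v.isLt; omega⟩) f hf
        have t := sum_three n 2 4 (by omega) f
        rw [hsum] at t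
        rw [rdn_path n]
        omega
    · apply le_sInf
      rintro k ⟨B, hsub, hcard, hgt⟩
      rw [← hcard]
      have hB2 : 2 ≤ B.card := by
        by_contra hlt
        push_neg at hlt
        have hcases : B.card = 0 ∨ B.card = 1 := by omega
        rcases hcases with h0 | h1
        · rw [Finset.card_eq_zero] at h0
          subst h0
          simp only [Finset.coe_empty, SimpleGraph.deleteEdges_empty] at hgt
          exact lt_irrefl _ hgt
        · obtain ⟨e, he⟩ := Finset.card_eq_one.mp h1
          subst he
          have heE : e ∈ (pathGraph n).edgeSet := hsub (by simp)
          rw [Finset.coe_singleton] at hgt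
          clear hsub hcard hlt h1
          revert heE hgt
          induction e using Sym2.ind with
          | _ u v =>
            intro hgt heE
            have hadj : (pathGraph n).Adj u v := (pathGraph n).mem_edgeSet.mp heE
            exact absurd hgt (not_lt.mpr (single_edge n h2 u v hadj))
      exact_mod_cast hB2
  · rw [if_neg h2]
    set m := n % 3 + 1 with hm
    apply le_antisymm
    · apply sInf_le
      refine ⟨({s((⟨m - 1, by omega⟩ : Fin n), (⟨m, by omega⟩ : Fin n))} :
        Finset (Sym2 (Fin n))), ?_, ?_, ?_⟩
      · intro e he
        simp only [Finset.coe_singleton, Set.mem_singleton_iff] at he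
        subst he
        exact (pathGraph n).mem_edgeSet.mpr (pathGraph_adj.mpr (Or.inl (by simp; omega)))
      · rw [Finset.card_singleton]; rfl
      · set B : Finset (Sym2 (Fin n)) :=
          {s((⟨m - 1, by omega⟩ : Fin n), (⟨m, by omega⟩ : Fin n))} with hB
        set H := (pathGraph n).deleteEdges ↑B with hH
        obtain ⟨f, hf, hsum⟩ := rdn_exists H
        have hpathH : ∀ u v : Fin n, H.Adj u v → u.val + 1 = v.val ∨ v.val + 1 = u.val :=
          fun u v h => hpathG u v ((SimpleGraph.deleteEdges_adj).mp h).1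
        have cm : ∀ u v : Fin n, H.Adj u v → u.val + 1 = v.val → v.val ≠ m :=
          adj_del_ne n B ⟨m - 1, by omega⟩ ⟨m, by omega⟩ (show m - 1 + 1 = m by omega)
            (Finset.mem_singleton_self _)
        have b1 := interval_lb n 0 m (by omega) H hpathH
          (fun u v h huv => ⟨by omega, cm u v h huv⟩) f hf
        have b2 := interval_lb n m n (by omega) H hpathH
          (fun u v h huv => ⟨cm u v h huv, by have := v.isLt; omega⟩) f hf
        have t := sum_three n m m le_rfl f
        rw [hsum] at t
        rw [rdn_path n]
        omega
    · apply le_sInf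
      rintro k ⟨B, hsub, hcard, hgt⟩
      rw [← hcard]
      have hB1 : 1 ≤ B.card := by
        by_contra hlt
        push_neg at hlt
        have h0 : B = ∅ := Finset.card_eq_zero.mp (by omega)
        subst h0
        simp only [Finset.coe_empty, SimpleGraph.deleteEdges_empty] at hgt
        exact lt_irrefl _ hgt
      exact_mod_cast hB1
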